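/- Let λ be a partition of n = p + q such that all parts of λ have the same parity (all odd or all even), and assume syd(λ;p,q) ≠ ∅. Then the graph Γ(λ;p,q) is connected. -/

import Mathlib

open Finset

/-- A partition of `n`, given by the function `l` listing its parts in weakly
decreasing order: `l j = λ_j` is the `j`-th part for `1 ≤ j ≤ len`, and
`l j = 0` for `j > len`. -/
structure PartitionData : Type where
  l : ℕ → ℕ
  len : ℕ
  anti : ∀ j, 1 ≤ j → l (j + 1) ≤ l j
  pos : ∀ j, 1 ≤ j → (0 < l j ↔ j ≤ len)

namespace PartitionData

/-- The multiplicity `m(i)` of `i` as a part of the partition. -/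
def mult (P : PartitionData) (i : ℕ) : ℕ :=
  ((Finset.Icc 1 P.len).filter (fun j => P.l j = i)).card

/-- The finite set of (distinct) parts of the partition. -/
def partsSet (P : PartitionData) : Finset ℕ :=
  (Finset.Icc 1 P.len).image P.l

/-- The sum of the parts (i.e. the number `n` the partition partitions). -/
def boxSum (P : PartitionData) : ℕ := ∑ j ∈ Finset.Icc 1 P.len, P.l j

/-- The number of odd parts of the partition. -/
def oddCount (P : PartitionData) : ℕ :=
  ((Finset.Icc 1 P.len).filter (fun j => Odd (P.l j))).card

end PartitionData

/-- A signed Young diagram of shape `P` and signature `(p, q)`, encoded by the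
function `f` sending each part length `i` to `m_T⁺(i)`, the number of rows of
length `i` whose leading sign is `+`.  A row of length `i` with leading sign
`+` has `(i+1)/2` plus-boxes and `i/2` minus-boxes, and vice versa. -/
structure SYD (P : PartitionData) (p q : ℕ) : Type where
  f : ℕ → ℕ
  le_mult : ∀ i, f i ≤ P.mult i
  plus_eq : ∑ i ∈ P.partsSet, (f i * ((i + 1) / 2) + (P.mult i - f i) * (i / 2)) = p
  minus_eq : ∑ i ∈ P.partsSet, (f i * (i / 2) + (P.mult i - f i) * ((i + 1) / 2)) = q

/-- `i` and `j` are consecutive distinct parts: `i > j` with no part strictly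
in between (so if the distinct parts are `i_1 > ⋯ > i_k`, the pairs are
`(i_r, i_{r+1})`). -/
def Consec (P : PartitionData) (i j : ℕ) : Prop :=
  i ∈ P.partsSet ∧ j ∈ P.partsSet ∧ j < i ∧ ∀ x ∈ P.partsSet, ¬ (j < x ∧ x < i)

/-- `j` is the smallest part `i_k`. -/
def IsMinPart (P : PartitionData) (j : ℕ) : Prop :=
  j ∈ P.partsSet ∧ ∀ x ∈ P.partsSet, j ≤ x

/-- Adjacency of signed Young diagrams with step `c`:
`π(T) - π(T') ∈ {±c(e_r - e_{r+1})} ∪ {±c e_k}` in the coordinates indexed by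
the distinct parts `i_1 > ⋯ > i_k`. -/
def AdjRel (P : PartitionData) {p q : ℕ} (c : ℕ) (T T' : SYD P p q) : Prop :=
  (∃ i j, Consec P i j ∧ (∀ x, x ≠ i → x ≠ j → T.f x = T'.f x) ∧
    ((T.f i = T'.f i + c ∧ T'.f j = T.f j + c) ∨
      (T'.f i = T.f i + c ∧ T.f j = T'.f j + c)))
  ∨ (∃ j, IsMinPart P j ∧ (∀ x, x ≠ j → T.f x = T'.f x) ∧
      (T.f j = T'.f j + c ∨ T'.f j = T.f j + c))

/-- The orbit graph `Γ(λ;p,q)` (type AIII). -/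
def orbitGraph (P : PartitionData) (p q : ℕ) : SimpleGraph (SYD P p q) :=
  SimpleGraph.fromRel (AdjRel P 1)

/-! ### Auxiliary machinery -/

section Aux
variable (P : PartitionData) {p q : ℕ}

lemma mem_partsSet_iff {i : ℕ} : i ∈ P.partsSet ↔ ∃ j, 1 ≤ j ∧ j ≤ P.len ∧ P.l j = i := by
  simp [PartitionData.partsSet, Finset.mem_image, Finset.mem_Icc, and_assoc]

lemma mult_pos {i : ℕ} (hi : i ∈ P.partsSet) : 0 < P.mult i := by
  rw [mem_partsSet_iff] at hi
  obtain ⟨j, h1, h2, h3⟩ := hi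
  exact Finset.card_pos.mpr ⟨j, Finset.mem_filter.mpr ⟨Finset.mem_Icc.mpr ⟨h1, h2⟩, h3⟩⟩

lemma mult_eq_zero {i : ℕ} (hi : i ∉ P.partsSet) : P.mult i = 0 := by
  rw [PartitionData.mult, Finset.card_eq_zero, Finset.filter_eq_empty_iff]
  intro j hj hlj
  exact hi (Finset.mem_image.mpr ⟨j, hj, hlj⟩)

lemma f_eq_zero (T : SYD P p q) {i : ℕ} (hi : i ∉ P.partsSet) : T.f i = 0 :=
  Nat.le_zero.mp (mult_eq_zero P hi ▸ T.le_mult i)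

lemma SYD.ext' {T T' : SYD P p q} (h : T.f = T'.f) : T = T' := by
  cases T; cases T'; simp_all

lemma boxSum_eq : P.boxSum = ∑ i ∈ P.partsSet, P.mult i * i := by
  rw [PartitionData.boxSum,
    ← Finset.sum_fiberwise_of_maps_to (fun j hj => Finset.mem_image_of_mem P.l hj) P.l]
  refine Finset.sum_congr rfl fun i _ => ?_
  rw [Finset.sum_congr rfl (fun j hj => (Finset.mem_filter.mp hj).2), Finset.sum_const,
    smul_eq_mul]
  rfl

lemma sum_split_two {i j : ℕ} (s : Finset ℕ) (hi : i ∈ s) (hj : j ∈ s) (hij : i ≠ j)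
    (F : ℕ → ℕ) : ∑ x ∈ s, F x = F i + F j + ∑ x ∈ s \ {i, j}, F x := by
  have key : s = insert i (insert j (s \ {i, j})) := by
    ext x
    simp only [Finset.mem_insert, Finset.mem_sdiff, Finset.mem_singleton, not_or]
    constructor
    · intro hx
      by_cases h1 : x = i
      · exact Or.inl h1
      by_cases h2 : x = j
      · exact Or.inr (Or.inl h2)
      · exact Or.inr (Or.inr ⟨hx, h1, h2⟩)
    · rintro (rfl | rfl | ⟨hx, -, -⟩)
      · exact hi
      · exact hj
      · exact hx
  conv_lhs => rw [key]
  rw [Finset.sum_insert (by simp [hij]), Finset.sum_insert (by simp), add_assoc]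

lemma sum_split_one {j : ℕ} (s : Finset ℕ) (hj : j ∈ s) (F : ℕ → ℕ) :
    ∑ x ∈ s, F x = F j + ∑ x ∈ s \ {j}, F x := by
  rw [Finset.sum_eq_add_sum_sdiff_singleton_of_mem hj]

/-- The number of `+` boxes in the rows of length `x`, when `c` of them lead with `+`. -/
def pterm (x c : ℕ) : ℕ := c * ((x + 1) / 2) + (P.mult x - c) * (x / 2)

/-- The number of `-` boxes in the rows of length `x`, when `c` of them lead with `+`. -/
def mterm (x c : ℕ) : ℕ := c * (x / 2) + (P.mult x - c) * ((x + 1) / 2)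

lemma pterm_add_mterm {x c : ℕ} (hc : c ≤ P.mult x) :
    pterm P x c + mterm P x c = P.mult x * x := by
  obtain ⟨d, hd⟩ := Nat.le.dest hc
  have hx : (x + 1) / 2 + x / 2 = x := by omega
  rw [pterm, mterm, ← hd]
  have h2 : c + d - c = d := by omega
  rw [h2]
  calc c * ((x + 1) / 2) + d * (x / 2) + (c * (x / 2) + d * ((x + 1) / 2))
      = (c + d) * ((x + 1) / 2 + x / 2) := by ring
    _ = (c + d) * x := by rw [hx]

lemma pterm_odd {x c : ℕ} (hx : Odd x) (hc : c ≤ P.mult x) :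
    pterm P x c = P.mult x * (x / 2) + c := by
  obtain ⟨t, rfl⟩ := hx
  obtain ⟨d, hd⟩ := Nat.le.dest hc
  have h1 : (2 * t + 1 + 1) / 2 = t + 1 := by omega
  have h2 : (2 * t + 1) / 2 = t := by omega
  rw [pterm, h1, h2, ← hd]
  have h3 : c + d - c = d := by omega
  rw [h3]
  ring

lemma pterm_even {x c : ℕ} (hx : Even x) (hc : c ≤ P.mult x) :
    pterm P x c = P.mult x * (x / 2) + 0 * c := by
  obtain ⟨t, rfl⟩ := hx
  obtain ⟨d, hd⟩ := Nat.le.dest hc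
  have h1 : (t + t + 1) / 2 = t := by omega
  have h2 : (t + t) / 2 = t := by omega
  rw [pterm, h1, h2, ← hd]
  have h3 : c + d - c = d := by omega
  rw [h3]
  ring

lemma minus_of_plus (hn : P.boxSum = p + q) (f : ℕ → ℕ) (hf : ∀ x, f x ≤ P.mult x)
    (hp : ∑ x ∈ P.partsSet, pterm P x (f x) = p) :
    ∑ x ∈ P.partsSet, mterm P x (f x) = q := by
  have h1 : ∑ x ∈ P.partsSet, (pterm P x (f x) + mterm P x (f x))
      = ∑ x ∈ P.partsSet, P.mult x * x :=
    Finset.sum_congr rfl fun x _ => pterm_add_mterm P (hf x)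
  rw [Finset.sum_add_distrib, hp] at h1
  have h2 := boxSum_eq P
  omega

lemma plus_sum {eps : ℕ}
    (heps : ∀ x ∈ P.partsSet, ∀ c, c ≤ P.mult x → pterm P x c = P.mult x * (x / 2) + eps * c)
    (f : ℕ → ℕ) (hf : ∀ x, f x ≤ P.mult x) :
    ∑ x ∈ P.partsSet, pterm P x (f x)
      = (∑ x ∈ P.partsSet, P.mult x * (x / 2)) + eps * ∑ x ∈ P.partsSet, f x := by
  rw [Finset.sum_congr rfl (fun x hx => heps x hx _ (hf x)), Finset.sum_add_distrib,
    Finset.mul_sum]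

/-- weight of a part: the number of parts `≤ i`. -/
def wt (i : ℕ) : ℕ := (P.partsSet.filter (· ≤ i)).card

lemma wt_pos {i : ℕ} (hi : i ∈ P.partsSet) : 0 < wt P i :=
  Finset.card_pos.mpr ⟨i, Finset.mem_filter.mpr ⟨hi, le_refl i⟩⟩

lemma wt_lt {i j : ℕ} (hi : i ∈ P.partsSet) (hij : j < i) : wt P j < wt P i := by
  apply Finset.card_lt_card
  constructor
  · intro x hx
    rw [Finset.mem_filter] at hx ⊢
    exact ⟨hx.1, le_trans hx.2 (le_of_lt hij)⟩
  · intro h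
    have := h (Finset.mem_filter.mpr ⟨hi, le_refl i⟩)
    rw [Finset.mem_filter] at this
    omega

/-- The potential function used for the connectivity argument. -/
def phi (T : SYD P p q) : ℕ := ∑ i ∈ P.partsSet, T.f i * wt P i

/-- A diagram with no potential-decreasing move available. -/
def LocMin (ev : Bool) (T : SYD P p q) : Prop :=
  (∀ i j, Consec P i j → T.f i = 0 ∨ T.f j = P.mult j) ∧
  (ev = true → ∀ j, IsMinPart P j → T.f j = 0)

lemma consec_of_exists_lt {x y : ℕ} (hy : y ∈ P.partsSet) (hx : x ∈ P.partsSet)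
    (hxy : x < y) : ∃ j, Consec P y j ∧ x ≤ j := by
  set S := P.partsSet.filter (· < y) with hS
  have hSne : S.Nonempty := ⟨x, Finset.mem_filter.mpr ⟨hx, hxy⟩⟩
  have hmem := Finset.mem_filter.mp (S.max'_mem hSne)
  refine ⟨S.max' hSne, ⟨hy, hmem.1, hmem.2, ?_⟩, S.le_max' x (Finset.mem_filter.mpr ⟨hx, hxy⟩)⟩
  rintro z hz ⟨h1, h2⟩
  have := S.le_max' z (Finset.mem_filter.mpr ⟨hz, h2⟩)
  omega

lemma chain_up (T : SYD P p q)
    (H : ∀ i j, Consec P i j → T.f i = 0 ∨ T.f j = P.mult j)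
    {x : ℕ} (hx : x ∈ P.partsSet) (hfx : T.f x < P.mult x) :
    ∀ y, y ∈ P.partsSet → x < y → T.f y = 0 := by
  intro y
  induction y using Nat.strong_induction_on with
  | _ y ih =>
    intro hy hxy
    obtain ⟨j, hcons, hxj⟩ := consec_of_exists_lt P hy hx hxy
    rcases H y j hcons with h | h
    · exact h
    · rcases eq_or_lt_of_le hxj with h' | hlt
      · rw [← h'] at h; omega
      · have h0 := ih j hcons.2.2.1 hcons.2.1 hlt
        have := mult_pos P hcons.2.1
        omega

lemma locmin_true_f (T : SYD P p q) (hT : LocMin P true T) : ∀ x, T.f x = 0 := by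
  intro x
  by_cases hx : x ∈ P.partsSet
  · have hsne : P.partsSet.Nonempty := ⟨x, hx⟩
    set j := P.partsSet.min' hsne with hj
    have hmin : IsMinPart P j := ⟨P.partsSet.min'_mem hsne, fun y hy => P.partsSet.min'_le y hy⟩
    have hj0 : T.f j = 0 := hT.2 rfl j hmin
    rcases eq_or_lt_of_le (hmin.2 x hx) with h | hlt
    · rw [← h]; exact hj0
    · have hjlt : T.f j < P.mult j := by have := mult_pos P hmin.1; omega
      exact chain_up P T hT.1 hmin.1 hjlt x hx hlt
  · exact f_eq_zero P T hx

end Aux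

section Moves
variable (P : PartitionData) {p q : ℕ}

lemma step_consec {eps : ℕ}
    (heps : ∀ x ∈ P.partsSet, ∀ c, c ≤ P.mult x → pterm P x c = P.mult x * (x / 2) + eps * c)
    (hn : P.boxSum = p + q) (T : SYD P p q) {i j : ℕ} (hc : Consec P i j)
    (hfi : 0 < T.f i) (hfj : T.f j < P.mult j) :
    ∃ T' : SYD P p q, (orbitGraph P p q).Adj T T' ∧ phi P T' < phi P T := by
  obtain ⟨his, hjs, hji, hnb⟩ := hc
  have hij : i ≠ j := by omega
  obtain ⟨k, hk⟩ : ∃ k, T.f i = k + 1 := ⟨T.f i - 1, by omega⟩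
  set f' : ℕ → ℕ := fun x => if x = i then k else if x = j then T.f j + 1 else T.f x with hf'
  have hf'i : f' i = k := by simp [hf']
  have hf'j : f' j = T.f j + 1 := by simp [hf', hij.symm]
  have hf'x : ∀ x, x ≠ i → x ≠ j → f' x = T.f x := by
    intro x h1 h2; simp [hf', h1, h2]
  have hb : ∀ x, f' x ≤ P.mult x := by
    intro x
    by_cases h1 : x = i
    · subst h1; rw [hf'i]; have := T.le_mult x; omega
    by_cases h2 : x = j
    · subst h2; rw [hf'j]; omega
    · rw [hf'x x h1 h2]; exact T.le_mult x
  have hrest : ∀ (F G : ℕ → ℕ), (∀ x, x ≠ i → x ≠ j → F x = G x) →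
      ∑ x ∈ P.partsSet \ {i, j}, F x = ∑ x ∈ P.partsSet \ {i, j}, G x := by
    intro F G h
    refine Finset.sum_congr rfl fun x hx => ?_
    rw [Finset.mem_sdiff, Finset.mem_insert, Finset.mem_singleton, not_or] at hx
    exact h x hx.2.1 hx.2.2
  have hp : ∑ x ∈ P.partsSet, pterm P x (f' x) = p := by
    have e1 := sum_split_two P.partsSet his hjs hij (fun x => pterm P x (f' x))
    have e2 := sum_split_two P.partsSet his hjs hij (fun x => pterm P x (T.f x))
    have e3 : ∑ x ∈ P.partsSet \ {i, j}, pterm P x (f' x)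
        = ∑ x ∈ P.partsSet \ {i, j}, pterm P x (T.f x) :=
      hrest _ _ (fun x h1 h2 => by rw [hf'x x h1 h2])
    have hpe : ∑ x ∈ P.partsSet, pterm P x (T.f x) = p := T.plus_eq
    have t1 := heps i his k (by have := T.le_mult i; omega)
    have t2 := heps i his (k + 1) (by have := T.le_mult i; omega)
    have t3 := heps j hjs (T.f j + 1) (by omega)
    have t4 := heps j hjs (T.f j) (by omega)
    rw [e1, hf'i, hf'j, e3, t1, t3]
    rw [e2, hk, t2, t4] at hpe
    have m1 : eps * (k + 1) = eps * k + eps := by ring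
    have m2 : eps * (T.f j + 1) = eps * T.f j + eps := by ring
    omega
  refine ⟨⟨f', hb, hp, minus_of_plus P hn f' hb hp⟩, ?_, ?_⟩
  · rw [orbitGraph, SimpleGraph.fromRel_adj]
    constructor
    · intro h
      have : T.f j = f' j := by rw [h]
      omega
    · left
      refine Or.inl ⟨i, j, ⟨his, hjs, hji, hnb⟩, fun x h1 h2 => (hf'x x h1 h2).symm, Or.inl ⟨?_, ?_⟩⟩
      · show T.f i = f' i + 1
        rw [hf'i, hk]
      · show f' j = T.f j + 1
        rw [hf'j]
  · show (∑ x ∈ P.partsSet, f' x * wt P x) < ∑ x ∈ P.partsSet, T.f x * wt P x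
    have e1 := sum_split_two P.partsSet his hjs hij (fun x => f' x * wt P x)
    have e2 := sum_split_two P.partsSet his hjs hij (fun x => T.f x * wt P x)
    have e3 : ∑ x ∈ P.partsSet \ {i, j}, f' x * wt P x
        = ∑ x ∈ P.partsSet \ {i, j}, T.f x * wt P x :=
      hrest _ _ (fun x h1 h2 => by rw [hf'x x h1 h2])
    have hw := wt_lt P his hji
    rw [e1, e2, hf'i, hf'j, hk, e3]
    have m1 : (k + 1) * wt P i = k * wt P i + wt P i := by ring
    have m2 : (T.f j + 1) * wt P j = T.f j * wt P j + wt P j := by ring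
    omega

lemma step_min
    (heps : ∀ x ∈ P.partsSet, ∀ c, c ≤ P.mult x → pterm P x c = P.mult x * (x / 2) + 0 * c)
    (hn : P.boxSum = p + q) (T : SYD P p q) {j : ℕ} (hj : IsMinPart P j)
    (hfj : 0 < T.f j) :
    ∃ T' : SYD P p q, (orbitGraph P p q).Adj T T' ∧ phi P T' < phi P T := by
  obtain ⟨k, hk⟩ : ∃ k, T.f j = k + 1 := ⟨T.f j - 1, by omega⟩
  have hjs := hj.1
  set f' : ℕ → ℕ := fun x => if x = j then k else T.f x with hf'
  have hf'j : f' j = k := by simp [hf']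
  have hf'x : ∀ x, x ≠ j → f' x = T.f x := by intro x h1; simp [hf', h1]
  have hb : ∀ x, f' x ≤ P.mult x := by
    intro x
    by_cases h1 : x = j
    · subst h1; rw [hf'j]; have := T.le_mult x; omega
    · rw [hf'x x h1]; exact T.le_mult x
  have hrest : ∀ (F G : ℕ → ℕ), (∀ x, x ≠ j → F x = G x) →
      ∑ x ∈ P.partsSet \ {j}, F x = ∑ x ∈ P.partsSet \ {j}, G x := by
    intro F G h
    refine Finset.sum_congr rfl fun x hx => ?_
    rw [Finset.mem_sdiff, Finset.mem_singleton] at hx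
    exact h x hx.2
  have hp : ∑ x ∈ P.partsSet, pterm P x (f' x) = p := by
    have e1 := sum_split_one P.partsSet hjs (fun x => pterm P x (f' x))
    have e2 := sum_split_one P.partsSet hjs (fun x => pterm P x (T.f x))
    have e3 : ∑ x ∈ P.partsSet \ {j}, pterm P x (f' x)
        = ∑ x ∈ P.partsSet \ {j}, pterm P x (T.f x) :=
      hrest _ _ (fun x h1 => by rw [hf'x x h1])
    have hpe : ∑ x ∈ P.partsSet, pterm P x (T.f x) = p := T.plus_eq
    have t1 := heps j hjs k (by have := T.le_mult j; omega)
    have t2 := heps j hjs (k + 1) (by have := T.le_mult j; omega)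
    rw [e1, hf'j, e3, t1]
    rw [e2, hk, t2] at hpe
    omega
  refine ⟨⟨f', hb, hp, minus_of_plus P hn f' hb hp⟩, ?_, ?_⟩
  · rw [orbitGraph, SimpleGraph.fromRel_adj]
    constructor
    · intro h
      have : T.f j = f' j := by rw [h]
      omega
    · left
      refine Or.inr ⟨j, hj, fun x h1 => (hf'x x h1).symm, Or.inl ?_⟩
      show T.f j = f' j + 1
      rw [hf'j, hk]
  · show (∑ x ∈ P.partsSet, f' x * wt P x) < ∑ x ∈ P.partsSet, T.f x * wt P x
    have e1 := sum_split_one P.partsSet hjs (fun x => f' x * wt P x)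
    have e2 := sum_split_one P.partsSet hjs (fun x => T.f x * wt P x)
    have e3 : ∑ x ∈ P.partsSet \ {j}, f' x * wt P x
        = ∑ x ∈ P.partsSet \ {j}, T.f x * wt P x :=
      hrest _ _ (fun x h1 => by rw [hf'x x h1])
    have hw := wt_pos P hjs
    rw [e1, e2, hf'j, hk, e3]
    have m1 : (k + 1) * wt P j = k * wt P j + wt P j := by ring
    omega

lemma step_any {eps : ℕ} {ev : Bool}
    (heps : ∀ x ∈ P.partsSet, ∀ c, c ≤ P.mult x → pterm P x c = P.mult x * (x / 2) + eps * c)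
    (hev : ev = true → eps = 0) (hn : P.boxSum = p + q) (T : SYD P p q)
    (hT : ¬ LocMin P ev T) :
    ∃ T' : SYD P p q, (orbitGraph P p q).Adj T T' ∧ phi P T' < phi P T := by
  by_cases hA : ∀ i j, Consec P i j → T.f i = 0 ∨ T.f j = P.mult j
  · have hB : ¬ (ev = true → ∀ j, IsMinPart P j → T.f j = 0) := fun h => hT ⟨hA, h⟩
    push_neg at hB
    obtain ⟨hev', j, hj, hfj⟩ := hB
    have he0 := hev hev'
    subst he0
    exact step_min P heps hn T hj (Nat.pos_of_ne_zero hfj)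
  · push_neg at hA
    obtain ⟨i, j, hcon, hfi, hfj⟩ := hA
    exact step_consec P heps hn T hcon (Nat.pos_of_ne_zero hfi)
      (lt_of_le_of_ne (T.le_mult j) hfj)

lemma reach {eps : ℕ} {ev : Bool}
    (heps : ∀ x ∈ P.partsSet, ∀ c, c ≤ P.mult x → pterm P x c = P.mult x * (x / 2) + eps * c)
    (hev : ev = true → eps = 0) (hn : P.boxSum = p + q) :
    ∀ T : SYD P p q, ∃ T0, LocMin P ev T0 ∧ (orbitGraph P p q).Reachable T T0 := by
  suffices H : ∀ n (T : SYD P p q), phi P T = n →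
      ∃ T0, LocMin P ev T0 ∧ (orbitGraph P p q).Reachable T T0 by
    exact fun T => H (phi P T) T rfl
  intro n
  induction n using Nat.strong_induction_on with
  | _ n ih =>
    intro T hphi
    by_cases h : LocMin P ev T
    · exact ⟨T, h, SimpleGraph.Reachable.refl T⟩
    · obtain ⟨T', hadj, hlt⟩ := step_any P heps hev hn T h
      obtain ⟨T0, h0, hr⟩ := ih (phi P T') (by omega) T' rfl
      exact ⟨T0, h0, (hadj.reachable).trans hr⟩

lemma no_max_diff (T T' : SYD P p q)
    (hs : ∑ x ∈ P.partsSet, T.f x = ∑ x ∈ P.partsSet, T'.f x)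
    (hT : ∀ i j, Consec P i j → T.f i = 0 ∨ T.f j = P.mult j)
    (hT' : ∀ i j, Consec P i j → T'.f i = 0 ∨ T'.f j = P.mult j)
    {x : ℕ} (hx : x ∈ P.partsSet) (hgt : T'.f x < T.f x)
    (hmax : ∀ y ∈ P.partsSet, x < y → T.f y = T'.f y) : False := by
  have hT'x : T'.f x < P.mult x := lt_of_lt_of_le hgt (T.le_mult x)
  have hzero' : ∀ y ∈ P.partsSet, x < y → T'.f y = 0 := fun y hy hxy =>
    chain_up P T' hT' hx hT'x y hy hxy
  have hzero : ∀ y ∈ P.partsSet, x < y → T.f y = 0 := fun y hy hxy =>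
    (hmax y hy hxy).trans (hzero' y hy hxy)
  have hex : ∃ y ∈ P.partsSet, T.f y < T'.f y := by
    by_contra h
    push_neg at h
    have := Finset.sum_lt_sum h ⟨x, hx, hgt⟩
    omega
  obtain ⟨y, hy, hylt⟩ := hex
  have hyx : y < x := by
    rcases lt_trichotomy y x with h | h | h
    · exact h
    · subst h; omega
    · have h1 := hzero y hy h
      have h2 := hzero' y hy h
      omega
  have h0 : T.f x = 0 :=
    chain_up P T hT hy (lt_of_lt_of_le hylt (T'.le_mult y)) x hx hyx
  omega

lemma locmin_unique_odd
    (heps : ∀ x ∈ P.partsSet, ∀ c, c ≤ P.mult x → pterm P x c = P.mult x * (x / 2) + 1 * c)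
    (T T' : SYD P p q)
    (hT : ∀ i j, Consec P i j → T.f i = 0 ∨ T.f j = P.mult j)
    (hT' : ∀ i j, Consec P i j → T'.f i = 0 ∨ T'.f j = P.mult j) : T = T' := by
  have hs : ∑ x ∈ P.partsSet, T.f x = ∑ x ∈ P.partsSet, T'.f x := by
    have h1 := plus_sum P heps T.f T.le_mult
    have h2 := plus_sum P heps T'.f T'.le_mult
    have e1 : ∑ x ∈ P.partsSet, pterm P x (T.f x) = p := T.plus_eq
    have e2 : ∑ x ∈ P.partsSet, pterm P x (T'.f x) = p := T'.plus_eq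
    rw [one_mul] at h1 h2
    omega
  apply SYD.ext'
  funext x0
  by_contra hx0
  set D := P.partsSet.filter (fun x => T.f x ≠ T'.f x) with hD
  have hx0s : x0 ∈ P.partsSet := by
    by_contra h
    rw [f_eq_zero P T h, f_eq_zero P T' h] at hx0
    exact hx0 rfl
  have hDne : D.Nonempty := ⟨x0, Finset.mem_filter.mpr ⟨hx0s, hx0⟩⟩
  set x := D.max' hDne with hxdef
  have hxmem := Finset.mem_filter.mp (D.max'_mem hDne)
  have hmax : ∀ y ∈ P.partsSet, x < y → T.f y = T'.f y := by
    intro y hy hxy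
    by_contra h
    have := D.le_max' y (Finset.mem_filter.mpr ⟨hy, h⟩)
    omega
  rcases lt_or_gt_of_ne hxmem.2 with h | h
  · exact no_max_diff P T' T hs.symm hT' hT hxmem.1 h
      (fun y hy hxy => (hmax y hy hxy).symm)
  · exact no_max_diff P T T' hs hT hT' hxmem.1 h hmax

end Moves

/-- If all parts of `λ` have the same parity (all odd or all even), and
`syd(λ;p,q) ≠ ∅`, then `Γ(λ;p,q)` is connected. -/
theorem stmt12 (P : PartitionData) (p q : ℕ)
    (hn : P.boxSum = p + q) (hne : Nonempty (SYD P p q))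
    (hpar : (∀ j, 1 ≤ j → j ≤ P.len → Odd (P.l j)) ∨
      (∀ j, 1 ≤ j → j ≤ P.len → Even (P.l j))) :
    (orbitGraph P p q).Connected := by
  rw [SimpleGraph.connected_iff]
  refine ⟨?_, hne⟩
  intro T T'
  rcases hpar with hodd | heven
  · have hodd' : ∀ i ∈ P.partsSet, Odd i := by
      intro i hi
      rw [mem_partsSet_iff] at hi
      obtain ⟨j, h1, h2, h3⟩ := hi
      rw [← h3]; exact hodd j h1 h2
    have heps : ∀ x ∈ P.partsSet, ∀ c, c ≤ P.mult x →
        pterm P x c = P.mult x * (x / 2) + 1 * c := by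
      intro x hx c hc
      rw [one_mul]; exact pterm_odd P (hodd' x hx) hc
    have hev : false = true → (1 : ℕ) = 0 := by simp
    obtain ⟨T0, h0, hr⟩ := reach P heps hev hn T
    obtain ⟨T0', h0', hr'⟩ := reach P heps hev hn T'
    have he : T0 = T0' := locmin_unique_odd P heps T0 T0' h0.1 h0'.1
    subst he
    exact hr.trans hr'.symm
  · have heven' : ∀ i ∈ P.partsSet, Even i := by
      intro i hi
      rw [mem_partsSet_iff] at hi
      obtain ⟨j, h1, h2, h3⟩ := hi
      rw [← h3]; exact heven j h1 h2
    have heps : ∀ x ∈ P.partsSet, ∀ c, c ≤ P.mult x →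
        pterm P x c = P.mult x * (x / 2) + 0 * c := by
      intro x hx c hc
      exact pterm_even P (heven' x hx) hc
    have hev : true = true → (0 : ℕ) = 0 := fun _ => rfl
    obtain ⟨T0, h0, hr⟩ := reach P heps hev hn T
    obtain ⟨T0', h0', hr'⟩ := reach P heps hev hn T'
    have he : T0 = T0' := by
      apply SYD.ext'
      funext x
      rw [locmin_true_f P T0 h0 x, locmin_true_f P T0' h0' x]
    subst he
    exact hr.trans hr'.symm
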